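/- Let K be a field, let n ≥ 1, d ≥ 1, fix a d^{n}-cage over K, and fix a node p = p_I. For every n-dimensional linear subspace τ ⊆ K^{n+1} with p ∈ τ, there exists a nonzero λ = (λ_1,…,λ_n) ∈ K^n, unique up to multiplication by a nonzero scalar, such that the polynomial P_λ := ∑_{j=1}^n λ_j·𝓛_j satisfies τ = { v ∈ K^{n+1} : ∑_{l=0}^{n} (∂P_λ/∂x_l)(p)·v_l = 0 }. (A degree-d hypersurface through all the nodes of the cage is uniquely determined by its tangent hyperplane at one node, and every hyperplane through that node occurs.) -/

import Mathlib

open MvPolynomial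

lemma finsupp_degree_one {σ : Type*} (m : σ →₀ ℕ) (h : m.degree = 1) :
    ∃ l, m = Finsupp.single l 1 := by
  classical
  have hne : m.support.Nonempty := by
    by_contra hs
    rw [Finset.not_nonempty_iff_eq_empty] at hs
    simp [Finsupp.degree_apply, hs] at h
  obtain ⟨l, hl⟩ := hne
  refine ⟨l, ?_⟩
  rw [Finsupp.eq_single_iff]
  have hml : 1 ≤ m l := Nat.one_le_iff_ne_zero.2 (Finsupp.mem_support_iff.1 hl)
  have hsum : ∑ x ∈ m.support, m x = 1 := by simpa [Finsupp.degree_apply] using h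
  have hsub : {l} ⊆ m.support := Finset.singleton_subset_iff.2 hl
  have := Finset.sum_le_sum_of_subset (f := m) hsub
  rw [Finset.sum_singleton, hsum] at this
  have hml1 : m l = 1 := le_antisymm this hml
  constructor
  · intro x hx
    by_contra hxl
    simp only [Finset.mem_singleton] at hxl
    have hsub2 : {l, x} ⊆ m.support := by
      intro y hy
      simp only [Finset.mem_insert, Finset.mem_singleton] at hy
      rcases hy with rfl | rfl <;> assumption
    have h2 := Finset.sum_le_sum_of_subset (f := m) hsub2
    rw [Finset.sum_pair (fun hh => hxl hh.symm), hsum] at h2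
    have := Finsupp.mem_support_iff.1 hx
    omega
  · exact hml1

lemma homog_one_rep {K σ : Type*} [Field K] [Fintype σ] [DecidableEq σ]
    (q : MvPolynomial σ K) (hq : q.IsHomogeneous 1) :
    q = ∑ l, C (q.coeff (Finsupp.single l 1)) * X l := by
  apply MvPolynomial.ext
  intro m
  rw [coeff_sum]
  simp only [coeff_C_mul, coeff_X']
  by_cases hm : m.degree = 1
  · obtain ⟨l, rfl⟩ := finsupp_degree_one m hm
    rw [Finset.sum_eq_single l]
    · simp
    · intro b _ hb
      rw [if_neg, mul_zero]
      exact fun hh => hb ((Finsupp.single_left_inj one_ne_zero).1 hh)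
    · simp
  · have h0 : q.coeff m = 0 := by
      by_contra hc
      have := hq hc
      replace this : Finsupp.degree m = 1 := by rw [Finsupp.degree_eq_weight_one]; exact this
      exact hm this
    rw [h0]
    symm
    apply Finset.sum_eq_zero
    intro l _
    rw [if_neg, mul_zero]
    intro hh
    apply hm
    rw [← hh]
    simp [Finsupp.degree_apply, Finsupp.support_single_ne_zero _ (one_ne_zero (α := ℕ))]

theorem cage_hypersurface_determined_by_tangent_hyperplane_at_node
    {K : Type*} [Field K] (n d : ℕ) (hn : 1 ≤ n) (hd : 1 ≤ d)
    (L : Fin n → Fin d → MvPolynomial (Fin (n + 1)) K)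
    (hL : ∀ j i, (L j i).IsHomogeneous 1)
    (p : (Fin n → Fin d) → Fin (n + 1) → K)
    (hp0 : ∀ I, p I ≠ 0)
    (hind : ∀ I : Fin n → Fin d, LinearIndependent K fun j => L j (I j))
    (hline : ∀ (I : Fin n → Fin d) (v : Fin (n + 1) → K),
      (∀ j, MvPolynomial.eval v (L j (I j)) = 0) ↔ ∃ c : K, v = c • p I)
    (hne : ∀ (j : Fin n) (i : Fin d) (I : Fin n → Fin d),
      i ≠ I j → MvPolynomial.eval (p I) (L j i) ≠ 0)
    (I : Fin n → Fin d)
    (τ : Submodule K (Fin (n + 1) → K))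
    (hτ : Module.finrank K τ = n) (hpτ : p I ∈ τ) :
    ∃ lam : Fin n → K, lam ≠ 0 ∧
      (↑τ : Set (Fin (n + 1) → K)) =
        {v : Fin (n + 1) → K |
          ∑ l, MvPolynomial.eval (p I)
              (MvPolynomial.pderiv l
                (∑ j, MvPolynomial.C (lam j) * ∏ i, L j i)) * v l = 0} ∧
      ∀ mu : Fin n → K, mu ≠ 0 →
        (↑τ : Set (Fin (n + 1) → K)) =
          {v : Fin (n + 1) → K |
            ∑ l, MvPolynomial.eval (p I)
                (MvPolynomial.pderiv l
                  (∑ j, MvPolynomial.C (mu j) * ∏ i, L j i)) * v l = 0} →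
        ∃ c : K, c ≠ 0 ∧ mu = c • lam := by
  classical
  -- the node lies on the colored linear forms
  have hLp : ∀ j, MvPolynomial.eval (p I) (L j (I j)) = 0 :=
    (hline I (p I)).2 ⟨1, (one_smul K (p I)).symm⟩
  -- coefficients of the linear forms
  set a : Fin n → Fin (n + 1) → K := fun j l => (L j (I j)).coeff (Finsupp.single l 1) with ha
  have hrep : ∀ j, L j (I j) = ∑ l, C (a j l) * X l := fun j => homog_one_rep _ (hL j (I j))
  have heval : ∀ (v : Fin (n + 1) → K) (j), MvPolynomial.eval v (L j (I j)) = ∑ l, a j l * v l := by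
    intro v j
    conv_lhs => rw [hrep j]
    simp
  have hpd : ∀ (j) (l), MvPolynomial.pderiv l (L j (I j)) = C (a j l) := by
    intro j l
    conv_lhs => rw [hrep j]
    rw [map_sum]
    rw [Finset.sum_eq_single l]
    · rw [pderiv_C_mul, pderiv_X_self, mul_one]
    · intro b _ hb
      rw [pderiv_C_mul, pderiv_X_of_ne hb, mul_zero]
    · simp
  -- the cofactor constants
  set c : Fin n → K := fun j =>
    MvPolynomial.eval (p I) (∏ i ∈ Finset.univ.erase (I j), L j i) with hc
  have hc0 : ∀ j, c j ≠ 0 := by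
    intro j
    rw [hc]
    simp only [map_prod]
    rw [Finset.prod_ne_zero_iff]
    intro i hi
    exact hne j i I (Finset.ne_of_mem_erase hi)
  -- derivative of the product at the node
  have hprodd : ∀ (j) (l), MvPolynomial.eval (p I) (MvPolynomial.pderiv l (∏ i, L j i))
      = a j l * c j := by
    intro j l
    have hsplit : (∏ i, L j i) = L j (I j) * ∏ i ∈ Finset.univ.erase (I j), L j i :=
      (Finset.mul_prod_erase Finset.univ _ (Finset.mem_univ (I j))).symm
    rw [hsplit, pderiv_mul, map_add, map_mul, map_mul, hLp j, zero_mul, add_zero,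
      hpd j l, eval_C]
  -- the key computation
  have hkey : ∀ (μ : Fin n → K) (v : Fin (n + 1) → K),
      ∑ l, MvPolynomial.eval (p I)
          (MvPolynomial.pderiv l (∑ j, MvPolynomial.C (μ j) * ∏ i, L j i)) * v l
        = ∑ j, μ j * c j * (∑ l, a j l * v l) := by
    intro μ v
    have h1 : ∀ l : Fin (n + 1), MvPolynomial.eval (p I)
        (MvPolynomial.pderiv l (∑ j, MvPolynomial.C (μ j) * ∏ i, L j i))
        = ∑ j, μ j * (a j l * c j) := by
      intro l
      rw [map_sum, map_sum]
      apply Finset.sum_congr rfl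
      intro j _
      rw [pderiv_C_mul, map_mul, eval_C, hprodd j l]
    calc ∑ l, MvPolynomial.eval (p I)
          (MvPolynomial.pderiv l (∑ j, MvPolynomial.C (μ j) * ∏ i, L j i)) * v l
        = ∑ l, (∑ j, μ j * (a j l * c j)) * v l := by
          apply Finset.sum_congr rfl; intro l _; rw [h1 l]
      _ = ∑ l, ∑ j, μ j * (a j l * c j) * v l := by
          apply Finset.sum_congr rfl; intro l _; rw [Finset.sum_mul]
      _ = ∑ j, ∑ l, μ j * (a j l * c j) * v l := Finset.sum_comm
      _ = ∑ j, μ j * c j * (∑ l, a j l * v l) := by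
          apply Finset.sum_congr rfl
          intro j _
          rw [Finset.mul_sum]
          apply Finset.sum_congr rfl
          intro l _
          ring
  -- the linear map φ
  set φ : (Fin (n + 1) → K) →ₗ[K] (Fin n → K) := (Matrix.of a).mulVecLin with hφ
  have hφapp : ∀ (v : Fin (n + 1) → K) (j), φ v j = ∑ l, a j l * v l := by
    intro v j
    simp [hφ, Matrix.mulVecLin_apply, Matrix.mulVec, dotProduct]
  have hkerφ : LinearMap.ker φ = Submodule.span K {p I} := by
    ext v
    rw [LinearMap.mem_ker, Submodule.mem_span_singleton]
    constructor
    · intro hv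
      obtain ⟨cc, hcc⟩ := (hline I v).1 (by
        intro j
        rw [heval v j, ← hφapp v j, hv, Pi.zero_apply])
      exact ⟨cc, hcc.symm⟩
    · rintro ⟨cc, rfl⟩
      have hz := (hline I (cc • p I)).2 ⟨cc, rfl⟩
      funext j
      rw [Pi.zero_apply, hφapp, ← heval]
      exact hz j
  have hker1 : Module.finrank K (LinearMap.ker φ) = 1 := by
    rw [hkerφ]; exact finrank_span_singleton (hp0 I)
  have hsurj : Function.Surjective φ := by
    rw [← LinearMap.range_eq_top]
    apply Submodule.eq_top_of_finrank_eq
    have hrn := LinearMap.finrank_range_add_finrank_ker φ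
    rw [hker1, Module.finrank_fin_fun] at hrn
    rw [Module.finrank_fin_fun]
    omega
  have hspanle : Submodule.span K {p I} ≤ τ :=
    Submodule.span_le.2 (Set.singleton_subset_iff.2 hpτ)
  have hmapne : Submodule.map φ τ ≠ ⊤ := by
    intro htop
    have hτtop : τ = ⊤ := by
      rw [eq_top_iff]
      rintro v -
      have hmem : φ v ∈ Submodule.map φ τ := htop ▸ Submodule.mem_top
      obtain ⟨u, hu, huv⟩ := hmem
      have hker : v - u ∈ LinearMap.ker φ := by
        rw [LinearMap.mem_ker, map_sub, huv, sub_self]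
      have hvu : v - u ∈ τ := hspanle (hkerφ ▸ hker)
      have := τ.add_mem hvu hu
      simpa using this
    rw [hτtop, finrank_top, Module.finrank_fin_fun] at hτ
    omega
  obtain ⟨f, hf0, hfmap⟩ :=
    Submodule.exists_dual_map_eq_bot_of_lt_top (lt_top_iff_ne_top.2 hmapne) inferInstance
  have hfτ : ∀ v ∈ τ, f (φ v) = 0 := by
    intro v hv
    have hmem : f (φ v) ∈ (Submodule.map φ τ).map f :=
      Submodule.mem_map_of_mem (Submodule.mem_map_of_mem hv)
    rw [hfmap, Submodule.mem_bot] at hmem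
    exact hmem
  set ν : Fin n → K := fun j => f (fun j' => if j = j' then 1 else 0) with hν
  have hfapp : ∀ w : Fin n → K, f w = ∑ j, ν j * w j := by
    intro w
    rw [LinearMap.pi_apply_eq_sum_univ f w]
    apply Finset.sum_congr rfl
    intro j _
    rw [smul_eq_mul, mul_comm]
  have hν0 : ν ≠ 0 := by
    intro h
    apply hf0
    apply LinearMap.ext
    intro w
    rw [hfapp]
    simp [funext_iff.1 h]
  set lam : Fin n → K := fun j => ν j / c j with hlam
  have hlamc : ∀ j, lam j * c j = ν j := fun j => div_mul_cancel₀ _ (hc0 j)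
  have hlam0 : lam ≠ 0 := by
    intro h
    apply hν0
    funext j
    rw [← hlamc j, funext_iff.1 h j]
    simp
  -- the statement's set, rewritten
  have hsetμ : ∀ (μ : Fin n → K),
      {v : Fin (n + 1) → K |
          ∑ l, MvPolynomial.eval (p I)
              (MvPolynomial.pderiv l
                (∑ j, MvPolynomial.C (μ j) * ∏ i, L j i)) * v l = 0}
        = {v : Fin (n + 1) → K | ∑ j, μ j * c j * φ v j = 0} := by
    intro μ
    ext v
    simp only [Set.mem_setOf_eq]
    rw [hkey μ v]
    constructor <;> intro h <;> [rw [← h]; rw [← h]] <;>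
      exact Finset.sum_congr rfl (fun j _ => by rw [hφapp])
  -- the linear functional g = f ∘ φ
  set g : (Fin (n + 1) → K) →ₗ[K] K := f ∘ₗ φ with hg
  have hgapp : ∀ v, g v = f (φ v) := fun v => rfl
  have hg0 : g ≠ 0 := by
    have hex : ∃ w, f w ≠ 0 := by
      by_contra hco
      push_neg at hco
      exact hf0 (LinearMap.ext fun w => hco w)
    obtain ⟨w, hw⟩ := hex
    obtain ⟨v, rfl⟩ := hsurj w
    intro h
    exact hw (by rw [← hgapp, h]; rfl)
  have hgrange : LinearMap.range g = ⊤ := by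
    rw [eq_top_iff]
    rintro x -
    have hex : ∃ v, g v ≠ 0 := by
      by_contra hco
      push_neg at hco
      exact hg0 (LinearMap.ext fun v => hco v)
    obtain ⟨v, hv⟩ := hex
    exact ⟨(x / g v) • v, by rw [map_smul, smul_eq_mul, div_mul_cancel₀ _ hv]⟩
  have hgker : Module.finrank K (LinearMap.ker g) = n := by
    have hrn := LinearMap.finrank_range_add_finrank_ker g
    rw [hgrange, finrank_top, Module.finrank_fin_fun, Module.finrank_self] at hrn
    omega
  have hτker : τ = LinearMap.ker g := by
    apply Submodule.eq_of_le_of_finrank_eq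
    · intro v hv
      rw [LinearMap.mem_ker, hgapp]
      exact hfτ v hv
    · rw [hτ, hgker]
  have hτset : (↑τ : Set (Fin (n + 1) → K)) = {v | ∑ j, lam j * c j * φ v j = 0} := by
    ext v
    have : (∑ j, lam j * c j * φ v j) = f (φ v) := by
      rw [hfapp]
      exact Finset.sum_congr rfl (fun j _ => by rw [hlamc])
    simp only [Set.mem_setOf_eq, this, SetLike.mem_coe]
    rw [hτker, LinearMap.mem_ker, hgapp]
  refine ⟨lam, hlam0, ?_, ?_⟩
  · rw [hsetμ lam, hτset]
  · intro mu hmu0 hmuset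
    rw [hsetμ mu] at hmuset
    -- kernel comparison
    have hiff : ∀ w : Fin n → K, (∑ j, ν j * w j = 0 ↔ ∑ j, mu j * c j * w j = 0) := by
      intro w
      obtain ⟨v, rfl⟩ := hsurj w
      have h1 : v ∈ (↑τ : Set (Fin (n + 1) → K)) ↔ ∑ j, ν j * φ v j = 0 := by
        rw [hτset]
        simp only [Set.mem_setOf_eq]
        constructor <;> intro h <;> rw [← h] <;>
          exact Finset.sum_congr rfl (fun j _ => by rw [hlamc])
      have h2 : v ∈ (↑τ : Set (Fin (n + 1) → K)) ↔ ∑ j, mu j * c j * φ v j = 0 := by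
        rw [hmuset]; rfl
      rw [← h1, h2]
    obtain ⟨j0, hj0⟩ := Function.ne_iff.1 hν0
    have hνj0 : ν j0 ≠ 0 := hj0
    set cc : K := (mu j0 * c j0) / ν j0 with hcc
    have hprop : ∀ k, mu k * c k = cc * ν k := by
      intro k
      have hwzero : ∑ j, ν j * ((if k = j then (1:K) else 0)
          - (ν k / ν j0) * (if j0 = j then 1 else 0)) = 0 := by
        simp only [mul_sub, Finset.sum_sub_distrib, mul_ite, mul_one, mul_zero,
          Finset.sum_ite_eq, Finset.mem_univ, if_true]
        field_simp
        ring
      have h2 := (hiff (fun j => (if k = j then (1:K) else 0)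
          - (ν k / ν j0) * (if j0 = j then 1 else 0))).1 hwzero
      simp only [mul_sub, Finset.sum_sub_distrib, mul_ite, mul_one, mul_zero,
        Finset.sum_ite_eq, Finset.mem_univ, if_true] at h2
      rw [sub_eq_zero] at h2
      rw [h2, hcc]
      field_simp
    have hcc0 : cc ≠ 0 := by
      intro h
      apply hmu0
      funext k
      have := hprop k
      rw [h, zero_mul] at this
      have := mul_eq_zero.1 this
      rcases this with h' | h'
      · exact h'
      · exact absurd h' (hc0 k)
    refine ⟨cc, hcc0, ?_⟩
    funext k
    have h3 : mu k * c k = (cc * lam k) * c k := by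
      rw [mul_assoc, hlamc k, hprop k]
    have := mul_right_cancel₀ (hc0 k) h3
    rw [this]
    rfl
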